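/- For every x ∈ ℝ there exist a constant M > 0 and an index N such that for all n ≥ N, |n · K (a_n x + b_n)^α exp(−C (a_n x + b_n)^τ) − e^{−x}| ≤ M e^{−x} / b_n^τ. That is, K(a_n x + b_n)^α exp(−C(a_n x + b_n)^τ) = (e^{−x}/n)(1 + O(1/b_n^τ)). -/

import Mathlib

open Filter Set

private lemma gw_hasDerivAt_g (C α τ : ℝ) {t : ℝ} (ht : 0 < t) :
    HasDerivAt (fun t : ℝ => α * Real.log t - C * t ^ τ)
      (α / t - C * τ * t ^ (τ - 1)) t := by
  have h1 : HasDerivAt (fun t : ℝ => α * Real.log t) (α * t⁻¹) t :=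
    (Real.hasDerivAt_log ht.ne').const_mul α
  have h2 : HasDerivAt (fun t : ℝ => C * t ^ τ) (C * (τ * t ^ (τ - 1))) t :=
    (Real.hasDerivAt_rpow_const (Or.inl ht.ne')).const_mul C
  have h3 := h1.sub h2
  refine h3.congr_deriv ?_
  rw [div_eq_mul_inv]; ring

private lemma gw_hasDerivAt_g' (C α τ : ℝ) {t : ℝ} (ht : 0 < t) :
    HasDerivAt (fun t : ℝ => α / t - C * τ * t ^ (τ - 1))
      (α * (-(t ^ 2)⁻¹) - C * τ * ((τ - 1) * t ^ (τ - 2))) t := by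
  have h1 : HasDerivAt (fun t : ℝ => α / t) (α * (-(t ^ 2)⁻¹)) t := by
    simpa [div_eq_mul_inv] using (hasDerivAt_inv ht.ne').const_mul α
  have h2 : HasDerivAt (fun t : ℝ => C * τ * t ^ (τ - 1))
      (C * τ * ((τ - 1) * t ^ (τ - 1 - 1))) t :=
    (Real.hasDerivAt_rpow_const (Or.inl ht.ne')).const_mul (C * τ)
  have e1 : τ - 1 - 1 = τ - 2 := by ring
  rw [e1] at h2
  exact h1.sub h2

set_option maxHeartbeats 2000000 in
private lemma gw_key (K C α τ : ℝ) (hK : 0 < K) (hC : 0 < C) (hα : 0 < α) (hτ : 1 ≤ τ)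
    (x : ℝ) (n : ℕ) (hn : 1 ≤ n) (b : ℝ)
    (hb1 : 1 ≤ b)
    (hb2 : 2 * α / (C * τ) ≤ b)
    (hb3 : 4 * |x| / (C * τ) ≤ b)
    (hb4 : (4 * α + C * τ * (τ - 1) * ((3/2 : ℝ) ^ (τ - 2) + 2)) * (2 * |x| / (C * τ)) ^ 2 ≤ b)
    (hfb : K * b ^ α * Real.exp (-C * b ^ τ) = 1 / (n : ℝ)) :
    |(n : ℝ) * (K * (1 / (C * τ * b ^ (τ - 1) - α / b) * x + b) ^ α *
        Real.exp (-C * (1 / (C * τ * b ^ (τ - 1) - α / b) * x + b) ^ τ)) - Real.exp (-x)|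
      ≤ (2 * ((4 * α + C * τ * (τ - 1) * ((3/2 : ℝ) ^ (τ - 2) + 2)) * (2 * |x| / (C * τ)) ^ 2) + 1)
          * Real.exp (-x) / b ^ τ := by
  have hb0 : (0 : ℝ) < b := lt_of_lt_of_le one_pos hb1
  have hCτ : (0 : ℝ) < C * τ := by positivity
  set C₂ : ℝ := 4 * α + C * τ * (τ - 1) * ((3/2 : ℝ) ^ (τ - 2) + 2) with hC₂def
  set C₃ : ℝ := C₂ * (2 * |x| / (C * τ)) ^ 2 with hC₃def
  have hC₂pos : 0 < C₂ := by
    have h32 : (0:ℝ) < (3/2 : ℝ) ^ (τ - 2) := Real.rpow_pos_of_pos (by norm_num) _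
    have : 0 ≤ C * τ * (τ - 1) * ((3/2 : ℝ) ^ (τ - 2) + 2) := by
      apply mul_nonneg (mul_nonneg hCτ.le (by linarith)) (by linarith)
    simp only [hC₂def]; linarith
  have hC₃0 : 0 ≤ C₃ := by positivity
  -- powers of b
  have hbτ1 : (1 : ℝ) ≤ b ^ (τ - 1) := by
    calc (1:ℝ) = b ^ (0:ℝ) := (Real.rpow_zero b).symm
      _ ≤ b ^ (τ - 1) := Real.rpow_le_rpow_of_exponent_le hb1 (by linarith)
  have hbτ1pos : (0 : ℝ) < b ^ (τ - 1) := lt_of_lt_of_le one_pos hbτ1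
  have hbτpos : (0 : ℝ) < b ^ τ := Real.rpow_pos_of_pos hb0 τ
  -- the slope denominator d
  set d : ℝ := C * τ * b ^ (τ - 1) - α / b with hddef
  have hαb : α / b ≤ C * τ / 2 * b ^ (τ - 1) := by
    have h1 : 2 * α ≤ C * τ * b := by
      rw [div_le_iff₀ hCτ] at hb2; linarith
    have h2 : α / b ≤ C * τ / 2 := by
      rw [div_le_iff₀ hb0]; nlinarith
    calc α / b ≤ C * τ / 2 := h2
      _ = C * τ / 2 * 1 := by ring
      _ ≤ C * τ / 2 * b ^ (τ - 1) := by
          apply mul_le_mul_of_nonneg_left hbτ1 (by positivity)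
  have hd2 : C * τ / 2 * b ^ (τ - 1) ≤ d := by
    simp only [hddef]; linarith
  have hd0 : (0 : ℝ) < d := lt_of_lt_of_le (by positivity) hd2
  set a : ℝ := 1 / d with hadef
  have ha0 : 0 < a := by positivity
  have haup : a ≤ 2 / (C * τ) * (b ^ (τ - 1))⁻¹ := by
    have h1 : a ≤ 1 / (C * τ / 2 * b ^ (τ - 1)) :=
      one_div_le_one_div_of_le (by positivity) hd2
    calc a ≤ 1 / (C * τ / 2 * b ^ (τ - 1)) := h1
      _ = 2 / (C * τ) * (b ^ (τ - 1))⁻¹ := by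
          field_simp
  have ha1 : a ≤ 2 / (C * τ) := by
    have : (b ^ (τ - 1))⁻¹ ≤ 1 := by
      rw [inv_le_one_iff₀]; right; exact hbτ1
    calc a ≤ 2 / (C * τ) * (b ^ (τ - 1))⁻¹ := haup
      _ ≤ 2 / (C * τ) * 1 := by
          apply mul_le_mul_of_nonneg_left this (by positivity)
      _ = 2 / (C * τ) := by ring
  set r : ℝ := a * |x| with hrdef
  have hr0 : 0 ≤ r := by positivity
  have hrb : r ≤ b / 2 := by
    have h1 : r ≤ 2 / (C * τ) * |x| := by
      apply mul_le_mul_of_nonneg_right ha1 (abs_nonneg x)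
    have h2 : 4 * |x| ≤ C * τ * b := by rw [div_le_iff₀ hCτ] at hb3; linarith
    have h3 : 2 / (C * τ) * |x| ≤ b / 2 := by
      rw [div_mul_eq_mul_div, div_le_div_iff₀ hCτ (by norm_num)]; nlinarith
    linarith
  set u : ℝ := a * x + b with hudef
  have hub : |u - b| ≤ r := by
    simp only [hudef, add_sub_cancel_right, hrdef, abs_mul, abs_of_pos ha0, le_refl]
  have hulow : b - r ≤ u := by
    have := neg_abs_le (u - b); linarith [hub, neg_abs_le (u-b)]
  have huhigh : u ≤ b + r := by have := le_abs_self (u - b); linarith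
  have hu0 : 0 < u := by linarith
  -- the interval
  set s : Set ℝ := Icc (b - r) (b + r) with hsdef
  have hbs : b ∈ s := by rw [hsdef, mem_Icc]; constructor <;> linarith
  have hus : u ∈ s := ⟨hulow, huhigh⟩
  have hmem : ∀ t ∈ s, b / 2 ≤ t ∧ t ≤ 3 / 2 * b ∧ 0 < t := by
    intro t ⟨h1, h2⟩
    refine ⟨by linarith, by linarith, by linarith⟩
  -- bound on second derivative
  have hbound : ∀ t ∈ s,
      ‖α * (-(t ^ 2)⁻¹) - C * τ * ((τ - 1) * t ^ (τ - 2))‖ ≤ C₂ * b ^ (τ - 2) := by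
    intro t hts
    obtain ⟨htlo, hthi, ht0⟩ := hmem t hts
    have hbτ2pos : (0:ℝ) < b ^ (τ - 2) := Real.rpow_pos_of_pos hb0 _
    -- bound on (t^2)⁻¹
    have h1 : (t ^ 2)⁻¹ ≤ 4 * (b ^ 2)⁻¹ := by
      have ht2 : b ^ 2 / 4 ≤ t ^ 2 := by nlinarith
      have hi : (t ^ 2)⁻¹ ≤ (b ^ 2 / 4)⁻¹ :=
        inv_anti₀ (by positivity) ht2
      calc (t ^ 2)⁻¹ ≤ (b ^ 2 / 4)⁻¹ := hi
        _ = 4 * (b ^ 2)⁻¹ := by field_simp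
    have h2 : (b ^ 2 : ℝ)⁻¹ ≤ b ^ (τ - 2) := by
      have e : ((b ^ 2 : ℝ))⁻¹ = b ^ (-2 : ℝ) := by
        rw [← Real.rpow_natCast b 2, ← Real.rpow_neg hb0.le]; norm_num
      rw [e]
      exact Real.rpow_le_rpow_of_exponent_le hb1 (by linarith)
    -- bound on t^(τ-2)
    have h3 : t ^ (τ - 2) ≤ ((3/2 : ℝ) ^ (τ - 2) + 2) * b ^ (τ - 2) := by
      rcases le_total τ 2 with h | h
      · have hb2pos : (0:ℝ) < b / 2 := by linarith
        have := Real.rpow_le_rpow_of_nonpos hb2pos htlo (by linarith : τ - 2 ≤ 0)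
        have e : (b / 2 : ℝ) ^ (τ - 2) = b ^ (τ - 2) / 2 ^ (τ - 2) :=
          Real.div_rpow hb0.le (by norm_num) _
        have h4 : (2 : ℝ) ^ (-(τ - 2)) ≤ 2 := by
          calc (2:ℝ) ^ (-(τ - 2)) ≤ (2:ℝ) ^ (1 : ℝ) :=
            Real.rpow_le_rpow_of_exponent_le one_le_two (by linarith)
          _ = 2 := Real.rpow_one 2
        have h5 : b ^ (τ - 2) / 2 ^ (τ - 2) ≤ 2 * b ^ (τ - 2) := by
          rw [div_eq_mul_inv, ← Real.rpow_neg (by norm_num : (0:ℝ) ≤ 2)]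
          nlinarith
        have h6 : (0:ℝ) < (3/2 : ℝ) ^ (τ - 2) := Real.rpow_pos_of_pos (by norm_num) _
        nlinarith
      · have := Real.rpow_le_rpow ht0.le hthi (by linarith : 0 ≤ τ - 2)
        have e : ((3 / 2 : ℝ) * b) ^ (τ - 2) = (3/2 : ℝ) ^ (τ - 2) * b ^ (τ - 2) :=
          Real.mul_rpow (by norm_num) hb0.le
        rw [show (3 / 2 * b : ℝ) = (3/2 : ℝ) * b by ring, e] at this
        nlinarith
    have habs : |α * (-(t ^ 2)⁻¹) - C * τ * ((τ - 1) * t ^ (τ - 2))|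
        ≤ α * (t ^ 2)⁻¹ + C * τ * ((τ - 1) * t ^ (τ - 2)) := by
      have hτ1 : (0:ℝ) ≤ τ - 1 := by linarith
      have hA : (0:ℝ) ≤ α * (t ^ 2)⁻¹ := by positivity
      have hB : (0:ℝ) ≤ C * τ * ((τ - 1) * t ^ (τ - 2)) :=
        mul_nonneg hCτ.le (mul_nonneg hτ1 (Real.rpow_pos_of_pos ht0 _).le)
      have e : α * (-(t ^ 2)⁻¹) - C * τ * ((τ - 1) * t ^ (τ - 2))
          = -(α * (t ^ 2)⁻¹ + C * τ * ((τ - 1) * t ^ (τ - 2))) := by ring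
      rw [e, abs_neg]
      exact le_of_eq (abs_of_nonneg (by linarith))
    have h31 : C * τ * ((τ - 1) * t ^ (τ - 2))
        ≤ C * τ * (τ - 1) * ((3/2 : ℝ) ^ (τ - 2) + 2) * b ^ (τ - 2) := by
      have hτ1 : (0:ℝ) ≤ τ - 1 := by linarith
      have h := mul_le_mul_of_nonneg_left h3 (mul_nonneg hCτ.le hτ1)
      calc C * τ * ((τ - 1) * t ^ (τ - 2)) = C * τ * (τ - 1) * t ^ (τ - 2) := by ring
        _ ≤ C * τ * (τ - 1) * (((3/2 : ℝ) ^ (τ - 2) + 2) * b ^ (τ - 2)) := h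
        _ = C * τ * (τ - 1) * ((3/2 : ℝ) ^ (τ - 2) + 2) * b ^ (τ - 2) := by ring
    have h11 : α * (t ^ 2)⁻¹ ≤ 4 * α * b ^ (τ - 2) := by
      calc α * (t ^ 2)⁻¹ ≤ α * (4 * (b ^ 2)⁻¹) := mul_le_mul_of_nonneg_left h1 hα.le
        _ ≤ α * (4 * b ^ (τ - 2)) := mul_le_mul_of_nonneg_left (by linarith) hα.le
        _ = 4 * α * b ^ (τ - 2) := by ring
    rw [Real.norm_eq_abs]
    calc |α * (-(t ^ 2)⁻¹) - C * τ * ((τ - 1) * t ^ (τ - 2))|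
        ≤ α * (t ^ 2)⁻¹ + C * τ * ((τ - 1) * t ^ (τ - 2)) := habs
      _ ≤ 4 * α * b ^ (τ - 2) + C * τ * (τ - 1) * ((3/2 : ℝ) ^ (τ - 2) + 2) * b ^ (τ - 2) := by
          linarith
      _ = C₂ * b ^ (τ - 2) := by rw [hC₂def]; ring
  have hs_conv : Convex ℝ s := convex_Icc _ _
  have hCb2 : (0:ℝ) ≤ C₂ * b ^ (τ - 2) :=
    mul_nonneg hC₂pos.le (Real.rpow_pos_of_pos hb0 _).le
  -- Step 1: g' is Lipschitz on s
  have hstep1 : ∀ t ∈ s, |(α / t - C * τ * t ^ (τ - 1)) - (α / b - C * τ * b ^ (τ - 1))|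
      ≤ C₂ * b ^ (τ - 2) * r := by
    intro t hts
    have hderiv : ∀ y ∈ s, HasDerivWithinAt (fun t : ℝ => α / t - C * τ * t ^ (τ - 1))
        (α * (-(y ^ 2)⁻¹) - C * τ * ((τ - 1) * y ^ (τ - 2))) s y := fun y hy =>
      (gw_hasDerivAt_g' C α τ (hmem y hy).2.2).hasDerivWithinAt
    have hm := hs_conv.norm_image_sub_le_of_norm_hasDerivWithin_le hderiv hbound hbs hts
    rw [Real.norm_eq_abs, Real.norm_eq_abs] at hm
    have htr : |t - b| ≤ r := by
      obtain ⟨h1, h2⟩ := hts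
      rw [abs_le]; constructor <;> linarith
    calc |(α / t - C * τ * t ^ (τ - 1)) - (α / b - C * τ * b ^ (τ - 1))|
        ≤ C₂ * b ^ (τ - 2) * |t - b| := hm
      _ ≤ C₂ * b ^ (τ - 2) * r := mul_le_mul_of_nonneg_left htr hCb2
  -- Step 2: MVT for the corrected function
  have hφderiv : ∀ y ∈ s, HasDerivWithinAt
      (fun t : ℝ => (α * Real.log t - C * t ^ τ) + t * d)
      ((α / y - C * τ * y ^ (τ - 1)) + d) s y := fun y hy =>
    ((gw_hasDerivAt_g C α τ (hmem y hy).2.2).add (hasDerivAt_mul_const d)).hasDerivWithinAt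
  have hφbound : ∀ y ∈ s, ‖(α / y - C * τ * y ^ (τ - 1)) + d‖ ≤ C₂ * b ^ (τ - 2) * r := by
    intro y hy
    have e : (α / y - C * τ * y ^ (τ - 1)) + d
        = (α / y - C * τ * y ^ (τ - 1)) - (α / b - C * τ * b ^ (τ - 1)) := by
      rw [hddef]; ring
    rw [Real.norm_eq_abs, e]
    exact hstep1 y hy
  have hmvt2 := hs_conv.norm_image_sub_le_of_norm_hasDerivWithin_le hφderiv hφbound hbs hus
  rw [Real.norm_eq_abs, Real.norm_eq_abs] at hmvt2
  set ε : ℝ := (α * Real.log u - C * u ^ τ) - (α * Real.log b - C * b ^ τ) + x with hεdef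
  have had : a * d = 1 := by rw [hadef]; field_simp
  have he : ((α * Real.log u - C * u ^ τ) + u * d) - ((α * Real.log b - C * b ^ τ) + b * d)
      = ε := by
    rw [hεdef, hudef]
    linear_combination x * had
  rw [he] at hmvt2
  have hεr : |ε| ≤ C₂ * b ^ (τ - 2) * r * r :=
    hmvt2.trans (mul_le_mul_of_nonneg_left hub (mul_nonneg hCb2 hr0))
  have hQ : (b ^ (τ - 1))⁻¹ = b ^ (1 - τ) := by
    rw [← Real.rpow_neg hb0.le]; ring_nf
  have hpowid : b ^ (τ - 2) * (b ^ (1 - τ) * b ^ (1 - τ)) = (b ^ τ)⁻¹ := by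
    rw [← Real.rpow_add hb0, ← Real.rpow_add hb0,
      show τ - 2 + (1 - τ + (1 - τ)) = -τ by ring, Real.rpow_neg hb0.le]
  have hrQ : r ≤ 2 * |x| / (C * τ) * b ^ (1 - τ) := by
    rw [← hQ]
    calc r = a * |x| := hrdef
      _ ≤ (2 / (C * τ) * (b ^ (τ - 1))⁻¹) * |x| :=
          mul_le_mul_of_nonneg_right haup (abs_nonneg x)
      _ = 2 * |x| / (C * τ) * (b ^ (τ - 1))⁻¹ := by ring
  have hεC₃ : |ε| ≤ C₃ * (b ^ τ)⁻¹ := by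
    have h1 : r * r ≤ (2 * |x| / (C * τ) * b ^ (1 - τ)) * (2 * |x| / (C * τ) * b ^ (1 - τ)) :=
      mul_le_mul hrQ hrQ hr0 (by positivity)
    calc |ε| ≤ C₂ * b ^ (τ - 2) * r * r := hεr
      _ = C₂ * b ^ (τ - 2) * (r * r) := by ring
      _ ≤ C₂ * b ^ (τ - 2) *
          ((2 * |x| / (C * τ) * b ^ (1 - τ)) * (2 * |x| / (C * τ) * b ^ (1 - τ))) :=
          mul_le_mul_of_nonneg_left h1 hCb2
      _ = C₂ * (2 * |x| / (C * τ)) ^ 2 * (b ^ (τ - 2) * (b ^ (1 - τ) * b ^ (1 - τ))) := by ring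
      _ = C₃ * (b ^ τ)⁻¹ := by rw [hpowid, hC₃def]
  have hε1 : |ε| ≤ 1 := by
    have h1 : b ≤ b ^ τ := by
      calc b = b ^ (1:ℝ) := (Real.rpow_one b).symm
        _ ≤ b ^ τ := Real.rpow_le_rpow_of_exponent_le hb1 hτ
    have h2 : (b ^ τ)⁻¹ ≤ b⁻¹ := inv_anti₀ hb0 h1
    have h3 : C₃ * (b ^ τ)⁻¹ ≤ C₃ * b⁻¹ := mul_le_mul_of_nonneg_left h2 hC₃0
    have h4 : C₃ * b⁻¹ ≤ b * b⁻¹ := mul_le_mul_of_nonneg_right hb4 (inv_nonneg.mpr hb0.le)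
    rw [mul_inv_cancel₀ hb0.ne'] at h4
    linarith
  -- identify n * f(u) with exp(-x + ε)
  have hexpand : ∀ t : ℝ, 0 < t → K * t ^ α * Real.exp (-C * t ^ τ)
      = K * Real.exp (α * Real.log t - C * t ^ τ) := by
    intro t ht
    rw [Real.rpow_def_of_pos ht, mul_assoc, ← Real.exp_add]
    ring_nf
  have hn0 : ((n : ℝ)) ≠ 0 := Nat.cast_ne_zero.mpr (by omega)
  have hmain : (n : ℝ) * (K * u ^ α * Real.exp (-C * u ^ τ)) = Real.exp (-x + ε) := by
    rw [hexpand u hu0]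
    have hEb : K * Real.exp (α * Real.log b - C * b ^ τ) = 1 / (n : ℝ) := by
      rw [← hexpand b hb0]; exact hfb
    have e3 : -x + ε = (α * Real.log u - C * u ^ τ) - (α * Real.log b - C * b ^ τ) := by
      rw [hεdef]; ring
    have hEb' : (n : ℝ) * (K * Real.exp (α * Real.log b - C * b ^ τ)) = 1 := by
      rw [hEb]; field_simp
    rw [e3]
    have hsplit : Real.exp (α * Real.log u - C * u ^ τ - (α * Real.log b - C * b ^ τ)) *
        Real.exp (α * Real.log b - C * b ^ τ) = Real.exp (α * Real.log u - C * u ^ τ) := by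
      rw [← Real.exp_add]; ring_nf
    linear_combination Real.exp (α * Real.log u - C * u ^ τ -
      (α * Real.log b - C * b ^ τ)) * hEb' - (↑n * K) * hsplit
  rw [hmain]
  have hfinal : |Real.exp (-x + ε) - Real.exp (-x)| ≤ Real.exp (-x) * (2 * |ε|) := by
    rw [Real.exp_add]
    have e2 : Real.exp (-x) * Real.exp ε - Real.exp (-x)
        = Real.exp (-x) * (Real.exp ε - 1) := by ring
    rw [e2, abs_mul, abs_of_pos (Real.exp_pos _)]
    exact mul_le_mul_of_nonneg_left (Real.abs_exp_sub_one_le hε1) (Real.exp_pos _).le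
  calc |Real.exp (-x + ε) - Real.exp (-x)| ≤ Real.exp (-x) * (2 * |ε|) := hfinal
    _ ≤ Real.exp (-x) * (2 * (C₃ * (b ^ τ)⁻¹)) := by
        apply mul_le_mul_of_nonneg_left (by linarith) (Real.exp_pos _).le
    _ ≤ (2 * C₃ + 1) * Real.exp (-x) / b ^ τ := by
        rw [div_eq_mul_inv]
        nlinarith [Real.exp_pos (-x), inv_pos.mpr hbτpos]

/-- Key estimate in the proof of Theorem 1.1:
`K(a_n x + b_n)^α exp(-C(a_n x + b_n)^τ) = (e^{-x}/n)(1 + O(1/b_n^τ))`, i.e.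
`|n · K(a_n x + b_n)^α exp(-C(a_n x + b_n)^τ) - e^{-x}| ≤ M e^{-x}/b_n^τ` eventually. -/
theorem stmt_19 (K C α τ x₁ : ℝ) (hK : 0 < K) (hC : 0 < C) (hα : 0 < α) (hτ : 1 ≤ τ)
    (hx₁ : 0 < x₁)
    (hanti : StrictAntiOn (fun x : ℝ => K * x ^ α * Real.exp (-C * x ^ τ)) (Set.Ici x₁))
    (hlim : Tendsto (fun x : ℝ => K * x ^ α * Real.exp (-C * x ^ τ)) atTop (nhds 0))
    (hrange : ∀ x ≥ x₁, K * x ^ α * Real.exp (-C * x ^ τ) ∈ Set.Ioc (0 : ℝ) 1)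
    (b : ℕ → ℝ)
    (hb : ∀ᶠ n : ℕ in atTop,
      x₁ ≤ b n ∧ K * b n ^ α * Real.exp (-C * b n ^ τ) = 1 / (n : ℝ))
    (a : ℕ → ℝ) (ha : ∀ n, a n = 1 / (C * τ * b n ^ (τ - 1) - α / b n)) :
    ∀ x : ℝ, ∃ M > (0 : ℝ), ∃ N : ℕ, ∀ n ≥ N,
      |(n : ℝ) * (K * (a n * x + b n) ^ α * Real.exp (-C * (a n * x + b n) ^ τ))
          - Real.exp (-x)|
        ≤ M * Real.exp (-x) / b n ^ τ := by

  intro x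
  have hbtop : Tendsto b atTop atTop := by
    rw [tendsto_atTop]
    intro R
    have hfR : 0 < K * (max R x₁) ^ α * Real.exp (-C * (max R x₁) ^ τ) :=
      (hrange (max R x₁) (le_max_right _ _)).1
    have h1 : ∀ᶠ n : ℕ in atTop,
        1 / (n : ℝ) < K * (max R x₁) ^ α * Real.exp (-C * (max R x₁) ^ τ) :=
      tendsto_one_div_atTop_nhds_zero_nat.eventually (eventually_lt_nhds hfR)
    filter_upwards [hb, h1] with n hbn hlt
    by_contra hcon
    push_neg at hcon
    have hlt2 : b n < max R x₁ := lt_of_lt_of_le hcon (le_max_left _ _)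
    have h3 := hanti (show b n ∈ Ici x₁ from hbn.1)
      (show max R x₁ ∈ Ici x₁ from mem_Ici.mpr (le_max_right _ _)) hlt2
    simp only at h3
    rw [hbn.2] at h3
    linarith
  set C₂ : ℝ := 4 * α + C * τ * (τ - 1) * ((3/2 : ℝ) ^ (τ - 2) + 2) with hC₂def
  set C₃ : ℝ := C₂ * (2 * |x| / (C * τ)) ^ 2 with hC₃def
  have hC₂pos : 0 < C₂ := by
    have h32 : (0:ℝ) < (3/2 : ℝ) ^ (τ - 2) := Real.rpow_pos_of_pos (by norm_num) _
    have h0 : 0 ≤ C * τ * (τ - 1) * ((3/2 : ℝ) ^ (τ - 2) + 2) :=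
      mul_nonneg (mul_nonneg (by positivity) (by linarith)) (by linarith)
    simp only [hC₂def]; linarith
  have hC₃0 : 0 ≤ C₃ := by positivity
  refine ⟨2 * C₃ + 1, by linarith, ?_⟩
  have hev : ∀ᶠ n : ℕ in atTop,
      |(n : ℝ) * (K * (a n * x + b n) ^ α * Real.exp (-C * (a n * x + b n) ^ τ))
          - Real.exp (-x)| ≤ (2 * C₃ + 1) * Real.exp (-x) / b n ^ τ := by
    filter_upwards [hb,
      hbtop.eventually_ge_atTop (max (max 1 (2 * α / (C * τ))) (max (4 * |x| / (C * τ)) C₃)),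
      eventually_ge_atTop 1] with n hbn hB hn1
    have h1 : 1 ≤ b n := le_trans (le_trans (le_max_left _ _) (le_max_left _ _)) hB
    have h2 : 2 * α / (C * τ) ≤ b n :=
      le_trans (le_trans (le_max_right _ _) (le_max_left _ _)) hB
    have h3 : 4 * |x| / (C * τ) ≤ b n :=
      le_trans (le_trans (le_max_left _ _) (le_max_right _ _)) hB
    have h4 : C₃ ≤ b n := le_trans (le_trans (le_max_right _ _) (le_max_right _ _)) hB
    have hk := gw_key K C α τ hK hC hα hτ x n hn1 (b n) h1 h2 h3 h4 hbn.2
    rw [ha n]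
    exact hk
  obtain ⟨N, hN⟩ := eventually_atTop.mp hev
  exact ⟨N, hN⟩
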